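/- Let n ≥ 1 and let x_0 < x_1 < ⋯ < x_n be real numbers. Then the Vandermonde product satisfies Δ_{0,n}(x) = n! · ∫ Δ_{1,n}(y) dy, where the integral is taken over the box {(y_1, …, y_n) : x_{i−1} < y_i < x_i for each 1 ≤ i ≤ n}; explicitly, ∏_{0 ≤ i < j ≤ n}(x_j − x_i) = n! ∫_{x_0}^{x_1} ⋯ ∫_{x_{n−1}}^{x_n} ∏_{1 ≤ i < j ≤ n}(y_j − y_i) dy_n ⋯ dy_1. -/

import Mathlib

open MeasureTheory Finset Matrix

lemma prod_pairs {M : Type*} [CommMonoid M] (m : ℕ) (f : Fin m → Fin m → M) :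
    ∏ p ∈ Finset.univ.filter (fun p : Fin m × Fin m => p.1 < p.2), f p.1 p.2
      = ∏ i, ∏ j ∈ Finset.Ioi i, f i j := by
  rw [Finset.prod_filter, Fintype.prod_prod_type]
  refine Finset.prod_congr rfl fun i _ => ?_
  rw [← Finset.filter_lt_eq_Ioi, Finset.prod_filter]

lemma vand_expand (m : ℕ) (y : Fin m → ℝ) :
    (∏ p ∈ Finset.univ.filter (fun p : Fin m × Fin m => p.1 < p.2), (y p.2 - y p.1))
      = ∑ σ : Equiv.Perm (Fin m), (Equiv.Perm.sign σ : ℝ) * ∏ i, y i ^ (σ i : ℕ) := by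
  rw [prod_pairs m (fun i j => y j - y i), ← Matrix.det_vandermonde, ← Matrix.det_transpose,
    Matrix.det_apply']
  refine Finset.sum_congr rfl fun σ _ => ?_
  simp [Matrix.vandermonde]

def Emat (n : ℕ) : Matrix (Fin (n+1)) (Fin (n+1)) ℝ :=
  fun k j => (if k = j then 1 else 0) +
    (Fin.cases 0 (fun j' => if k = j'.castSucc then (-1:ℝ) else 0) j)

lemma det_Emat (n : ℕ) : (Emat n).det = 1 := by
  rw [Matrix.det_of_upperTriangular]
  · refine Finset.prod_eq_one fun j _ => ?_
    induction j using Fin.cases with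
    | zero => simp [Emat]
    | succ j' =>
        simp [Emat, (Fin.castSucc_lt_succ : j'.castSucc < j'.succ).ne']
  · intro k j hjk
    induction j using Fin.cases with
    | zero =>
        have hk : k ≠ 0 := Fin.pos_iff_ne_zero.mp (by simpa using hjk)
        simp [Emat, hk]
    | succ j' =>
        have h1 : k ≠ j'.succ := hjk.ne'
        have h2 : k ≠ j'.castSucc := ((Fin.castSucc_lt_succ : j'.castSucc < j'.succ).trans hjk).ne'
        simp [Emat, h1, h2]

def Nmat (n : ℕ) (x : Fin (n+1) → ℝ) : Matrix (Fin (n+1)) (Fin (n+1)) ℝ :=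
  fun i j => Fin.cases (x 0 ^ (i:ℕ))
    (fun j' => x j'.succ ^ (i:ℕ) - x j'.castSucc ^ (i:ℕ)) j

lemma Nmat_eq (n : ℕ) (x : Fin (n+1) → ℝ) :
    Nmat n x = (Matrix.vandermonde x)ᵀ * Emat n := by
  ext i j
  rw [Matrix.mul_apply]
  induction j using Fin.cases with
  | zero =>
      simp [Nmat, Emat, Matrix.vandermonde, mul_add, Finset.sum_add_distrib,
        Finset.sum_ite_eq']
  | succ j' =>
      simp [Nmat, Emat, Matrix.vandermonde, mul_add, Finset.sum_add_distrib,
        Finset.sum_ite_eq', sub_eq_add_neg]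

lemma det_Nmat (n : ℕ) (x : Fin (n+1) → ℝ) :
    (Nmat n x).det = (Matrix.vandermonde x).det := by
  rw [Nmat_eq, Matrix.det_mul, det_Emat, Matrix.det_transpose, mul_one]

lemma key (n : ℕ) (x : Fin (n+1) → ℝ) :
    (Matrix.vandermonde x).det
      = ∑ σ : Equiv.Perm (Fin n), (Equiv.Perm.sign σ : ℝ) *
          ∏ i, (x i.succ ^ ((σ i : ℕ)+1) - x i.castSucc ^ ((σ i:ℕ)+1)) := by
  rw [← det_Nmat, Matrix.det_succ_row_zero]
  rw [Finset.sum_eq_single 0]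
  · rw [Fin.succAbove_zero]
    have h0 : (Nmat n x) 0 0 = 1 := by simp [Nmat]
    rw [h0]
    simp only [Fin.val_zero, pow_zero, one_mul, mul_one]
    rw [Matrix.det_apply']
    rfl
  · intro j _ hj
    have : ∃ j' : Fin n, j = j'.succ := ⟨j.pred hj, (Fin.succ_pred j hj).symm⟩
    obtain ⟨j', rfl⟩ := this
    have : (Nmat n x) 0 j'.succ = 0 := by simp [Nmat]
    rw [this]; ring
  · simp

lemma indicator_pi_prod (n : ℕ) (s : Fin n → Set ℝ) (f : Fin n → ℝ → ℝ) :
    (Set.pi Set.univ s).indicator (fun y : Fin n → ℝ => ∏ i, f i (y i))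
      = fun y => ∏ i, (s i).indicator (f i) (y i) := by
  ext y
  by_cases hy : y ∈ Set.pi Set.univ s
  · rw [Set.indicator_of_mem hy]
    exact Finset.prod_congr rfl fun i _ =>
      (Set.indicator_of_mem (hy i (Set.mem_univ i)) _).symm
  · rw [Set.indicator_of_notMem hy]
    obtain ⟨i, hi⟩ : ∃ i, y i ∉ s i := by simpa [Set.mem_pi] using hy
    exact (Finset.prod_eq_zero (Finset.mem_univ i)
      (Set.indicator_of_notMem hi _)).symm

lemma pow_integrableOn (a b : ℝ) (k : ℕ) :
    IntegrableOn (fun t : ℝ => t ^ k) (Set.Ioo a b) := by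
  exact (intervalIntegral.intervalIntegrable_pow (μ := volume) (a := a) (b := b)
    (n := k)).1.mono_set Set.Ioo_subset_Ioc_self

lemma box_integrable (n : ℕ) (a b : Fin n → ℝ) (k : Fin n → ℕ) :
    IntegrableOn (fun y : Fin n → ℝ => ∏ i, y i ^ k i)
      (Set.pi Set.univ fun i => Set.Ioo (a i) (b i)) := by
  rw [← integrable_indicator_iff
    (MeasurableSet.univ_pi fun i => measurableSet_Ioo)]
  rw [indicator_pi_prod n _ (fun i t => t ^ k i)]
  exact Integrable.fintype_prod fun i =>
    (integrable_indicator_iff measurableSet_Ioo).2 (pow_integrableOn _ _ _)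

lemma box_integral (n : ℕ) (a b : Fin n → ℝ) (k : Fin n → ℕ) :
    ∫ y in Set.pi Set.univ fun i => Set.Ioo (a i) (b i),
        ∏ i, y i ^ k i
      = ∏ i, ∫ t in Set.Ioo (a i) (b i), t ^ k i := by
  rw [← integral_indicator (MeasurableSet.univ_pi fun i => measurableSet_Ioo),
    indicator_pi_prod n _ (fun i t => t ^ k i),
    MeasureTheory.volume_pi, integral_fintype_prod_eq_prod
      (fun i => (Set.Ioo (a i) (b i)).indicator (fun t => t ^ k i))]
  exact Finset.prod_congr rfl fun i _ => (integral_indicator measurableSet_Ioo)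

lemma pow_integral (a b : ℝ) (h : a ≤ b) (k : ℕ) :
    ∫ t in Set.Ioo a b, t ^ k = (b ^ (k+1) - a ^ (k+1)) / (k+1) := by
  rw [← MeasureTheory.integral_Ioc_eq_integral_Ioo,
    ← intervalIntegral.integral_of_le h, integral_pow]

theorem vandermonde_integral (n : ℕ) (hn : 1 ≤ n) (x : Fin (n + 1) → ℝ)
    (hx : StrictMono x) :
    (∏ p ∈ Finset.univ.filter (fun p : Fin (n + 1) × Fin (n + 1) => p.1 < p.2),
        (x p.2 - x p.1)) =
      (Nat.factorial n : ℝ) *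
        ∫ y in Set.univ.pi (fun i : Fin n => Set.Ioo (x i.castSucc) (x i.succ)),
          ∏ p ∈ Finset.univ.filter (fun p : Fin n × Fin n => p.1 < p.2),
            (y p.2 - y p.1) := by
  set a : Fin n → ℝ := fun i => x i.castSucc with ha
  set b : Fin n → ℝ := fun i => x i.succ with hb
  have hab : ∀ i, a i ≤ b i := fun i => (hx (Fin.castSucc_lt_succ : i.castSucc < i.succ)).le
  have hfac0 : ((Nat.factorial n : ℕ) : ℝ) ≠ 0 := by
    exact_mod_cast (Nat.factorial_ne_zero n)
  have hfac : ∀ σ : Equiv.Perm (Fin n), ∏ i, ((σ i : ℕ) + 1 : ℝ) = (Nat.factorial n : ℝ) := by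
    intro σ
    rw [Equiv.prod_comp σ (fun i : Fin n => ((i:ℕ)+1:ℝ)),
      ← Finset.prod_range_add_one_eq_factorial, Nat.cast_prod,
      ← Fin.prod_univ_eq_prod_range (fun i => ((i + 1 : ℕ) : ℝ)) n]
    push_cast
    rfl
  -- compute the integral
  have hI : (∫ y in Set.univ.pi (fun i : Fin n => Set.Ioo (a i) (b i)),
        ∏ p ∈ Finset.univ.filter (fun p : Fin n × Fin n => p.1 < p.2), (y p.2 - y p.1))
      = ∑ σ : Equiv.Perm (Fin n), (Equiv.Perm.sign σ : ℝ) *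
          ∏ i, (b i ^ ((σ i : ℕ)+1) - a i ^ ((σ i:ℕ)+1)) / ((σ i : ℕ)+1) := by
    calc (∫ y in Set.univ.pi (fun i : Fin n => Set.Ioo (a i) (b i)),
          ∏ p ∈ Finset.univ.filter (fun p : Fin n × Fin n => p.1 < p.2), (y p.2 - y p.1))
        = ∫ y in Set.univ.pi (fun i : Fin n => Set.Ioo (a i) (b i)),
            ∑ σ : Equiv.Perm (Fin n), (Equiv.Perm.sign σ : ℝ) * ∏ i, y i ^ (σ i : ℕ) := by
          simp_rw [vand_expand n]
      _ = ∑ σ : Equiv.Perm (Fin n), ∫ y in Set.univ.pi (fun i : Fin n => Set.Ioo (a i) (b i)),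
            (Equiv.Perm.sign σ : ℝ) * ∏ i, y i ^ (σ i : ℕ) :=
          integral_finset_sum _ (fun σ _ =>
            ((box_integrable n a b (fun i => (σ i : ℕ))).const_mul _))
      _ = ∑ σ : Equiv.Perm (Fin n), (Equiv.Perm.sign σ : ℝ) *
            ∫ y in Set.univ.pi (fun i : Fin n => Set.Ioo (a i) (b i)),
              ∏ i, y i ^ (σ i : ℕ) := by
          simp_rw [MeasureTheory.integral_const_mul]
      _ = ∑ σ : Equiv.Perm (Fin n), (Equiv.Perm.sign σ : ℝ) *
            ∏ i, (b i ^ ((σ i : ℕ)+1) - a i ^ ((σ i:ℕ)+1)) / ((σ i : ℕ)+1) := by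
          refine Finset.sum_congr rfl fun σ _ => ?_
          rw [box_integral n a b (fun i => (σ i : ℕ))]
          congr 1
          exact Finset.prod_congr rfl fun i _ => pow_integral _ _ (hab i) _
  rw [hI, Finset.mul_sum]
  rw [prod_pairs (n+1) (fun i j => x j - x i), ← Matrix.det_vandermonde, key]
  refine Finset.sum_congr rfl fun σ _ => ?_
  rw [Finset.prod_div_distrib, hfac σ]
  field_simp
  rfl
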